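/- arXiv:2102.12734 — 2 statements merged into one kernel-verified Lean document; each statement's English description precedes it below -/
import Mathlib

section
/- One-step over-approximation soundness: for any m ≥ 1 with δ = T/m, the set P_m produced by iterating P_j = Reach(P_{j−1},A,δ) ∩ B(f(jδ),ε) from P_0 contains SReach(P_0,A,f,ε,T); in particular, if P_m = ∅ (or any intermediate P_j = ∅) then SReach(P_0,A,f,ε,T) = ∅. -/
open Matrix Set

noncomputable def reach {n : ℕ} (A : Matrix (Fin n) (Fin n) ℝ) (t : ℝ)
    (P : Set (Fin n → ℝ)) : Set (Fin n → ℝ) :=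
  (fun x => NormedSpace.exp (t • A) *ᵥ x) '' P

noncomputable def sreach {n : ℕ} (P : Set (Fin n → ℝ)) (A : Matrix (Fin n) (Fin n) ℝ)
    (f : ℝ → (Fin n → ℝ)) (ε T : ℝ) : Set (Fin n → ℝ) :=
  (fun x => NormedSpace.exp (T • A) *ᵥ x) ''
    {x ∈ P | ∀ t ∈ Set.Icc (0:ℝ) T, ‖NormedSpace.exp (t • A) *ᵥ x - f t‖ ≤ ε}

/-- One-step over-approximation soundness: iterating
`P_{j+1} = Reach(P_j, A, δ) ∩ B(f((j+1)δ), ε)` with `δ = T/m` yields a set `P_m`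
containing `SReach(P_0, A, f, ε, T)`; in particular if some `P_j` is empty then the
synchronized reachable set is empty. -/
theorem overapprox_sound {n : ℕ} (A B : Matrix (Fin n) (Fin n) ℝ) (x₀ : Fin n → ℝ)
    (f : ℝ → (Fin n → ℝ)) (hf : ∀ t, f t = NormedSpace.exp (t • B) *ᵥ x₀)
    (ε T : ℝ) (hε : 0 ≤ ε) (hT : 0 < T) (m : ℕ) (hm : 0 < m)
    (δ : ℝ) (hδ : δ = T / m)
    (P : ℕ → Set (Fin n → ℝ))
    (hstep : ∀ j < m, P (j + 1) =
      ((fun x => NormedSpace.exp (δ • A) *ᵥ x) '' P j) ∩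
        {z : Fin n → ℝ | ‖z - f ((j + 1 : ℕ) * δ)‖ ≤ ε}) :
    sreach (P 0) A f ε T ⊆ P m ∧
      ((∃ j ≤ m, P j = ∅) → sreach (P 0) A f ε T = ∅) := by
  have hmne : (m:ℝ) ≠ 0 := Nat.cast_ne_zero.mpr hm.ne'
  have hTm : (m:ℝ) * δ = T := by rw [hδ]; field_simp
  have hδpos : 0 < δ := by
    rw [hδ]; exact div_pos hT (by exact_mod_cast hm)
  have key : ∀ x, x ∈ P 0 →
      (∀ t ∈ Set.Icc (0:ℝ) T, ‖NormedSpace.exp (t • A) *ᵥ x - f t‖ ≤ ε) →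
      ∀ j ≤ m, NormedSpace.exp (((j:ℝ) * δ) • A) *ᵥ x ∈ P j := by
    intro x hx0 hx j hj
    induction j with
    | zero => simpa [NormedSpace.exp_zero, Matrix.one_mulVec] using hx0
    | succ j ih =>
      have hj' : j < m := hj
      rw [hstep j hj']
      have hsplit : ((↑(j+1):ℝ) * δ) • A = δ • A + ((j:ℝ) * δ) • A := by
        push_cast
        rw [← add_smul]
        ring_nf
      constructor
      · refine ⟨NormedSpace.exp (((j:ℝ) * δ) • A) *ᵥ x, ih (le_of_lt hj'), ?_⟩
        simp only []
        rw [hsplit, Matrix.exp_add_of_commute _ _ (((Commute.refl A).smul_right ((j:ℝ)*δ)).smul_left δ), ← Matrix.mulVec_mulVec]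
      · have ht : (↑(j+1):ℝ) * δ ∈ Set.Icc (0:ℝ) T := by
          constructor
          · positivity
          · rw [← hTm]
            apply mul_le_mul_of_nonneg_right _ hδpos.le
            exact_mod_cast Nat.succ_le_of_lt hj'
        have := hx ((↑(j+1):ℝ) * δ) ht
        simpa using this
  constructor
  · rintro y ⟨x, ⟨hx0, hx⟩, rfl⟩
    have h := key x hx0 hx m le_rfl
    rwa [hTm] at h
  · rintro ⟨j, hj, hPj⟩
    rw [Set.eq_empty_iff_forall_notMem]
    rintro y ⟨x, ⟨hx0, hx⟩, rfl⟩
    have h := key x hx0 hx j hj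
    rw [hPj] at h
    exact h
end

section
/- Robust completeness of sampled emptiness checking: let P ⊆ ℝⁿ be compact, A, B ∈ ℝ^{n×n}, f(t) = e^{Bt}x₀, and ε, ε₀ > 0. If for every x ∈ P there exists t ∈ [0,T] with dist(e^{At}·x, T(f,ε)(t)) > ε₀ (infinity-norm distance to the ε-tube), then there exists m ∈ ℕ such that for δ = T/m, for every x ∈ P there is some j ∈ {1,…,m} with e^{Ajδ}·x ∉ T(f,ε)(jδ). -/
open Matrix Set

lemma exp_smul_continuous {n : ℕ} (A : Matrix (Fin n) (Fin n) ℝ) :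
    Continuous fun t : ℝ => NormedSpace.exp (t • A) := by
  letI := Matrix.linftyOpNormedRing (n := Fin n) (α := ℝ)
  letI := Matrix.linftyOpNormedAlgebra (n := Fin n) (R := ℝ) (α := ℝ)
  exact (continuous_iff_continuousAt.2 fun x => (NormedSpace.exp_analytic (𝕂 := ℝ) x).continuousAt).comp (continuous_id.smul continuous_const)

lemma infDist_ball_lt {n : ℕ} (p c : Fin n → ℝ) (ε ε₀ : ℝ) (hε : 0 < ε) (hε₀ : 0 < ε₀)
    (h : ε₀ < Metric.infDist p {y : Fin n → ℝ | ‖y - c‖ ≤ ε}) :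
    ε + ε₀ < ‖p - c‖ := by
  set r := ‖p - c‖ with hr
  by_cases hle : r ≤ ε
  · exfalso
    have : p ∈ {y : Fin n → ℝ | ‖y - c‖ ≤ ε} := hle
    have := Metric.infDist_zero_of_mem this
    rw [this] at h; linarith
  · push_neg at hle
    have hrpos : 0 < r := lt_trans hε hle
    set y : Fin n → ℝ := c + (ε / r) • (p - c) with hy
    have hymem : y ∈ {y : Fin n → ℝ | ‖y - c‖ ≤ ε} := by
      simp only [Set.mem_setOf_eq, hy, add_sub_cancel_left, norm_smul]
      rw [Real.norm_eq_abs, abs_of_pos (div_pos hε hrpos), ← hr]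
      rw [div_mul_cancel₀ _ (ne_of_gt hrpos)]
    have hdist : dist p y = r - ε := by
      rw [dist_eq_norm]
      have : p - y = (1 - ε / r) • (p - c) := by
        rw [hy]; module
      rw [this, norm_smul, Real.norm_eq_abs, ← hr]
      rw [abs_of_nonneg (by rw [sub_nonneg]; exact (div_le_one hrpos).mpr (le_of_lt hle))]
      field_simp
    have hle2 : Metric.infDist p {y : Fin n → ℝ | ‖y - c‖ ≤ ε} ≤ r - ε :=
      hdist ▸ Metric.infDist_le_dist_of_mem hymem
    linarith

/-- Robust completeness of sampled emptiness checking: if every point of the compact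
set `P` exits the ε-tube by more than `ε₀` at some time in `[0,T]`, then some finite
uniform sampling rate `m` detects a tube exit at a sampled time for every `x ∈ P`. -/
theorem robust_completeness {n : ℕ} (A B : Matrix (Fin n) (Fin n) ℝ) (x₀ : Fin n → ℝ)
    (f : ℝ → (Fin n → ℝ)) (hf : ∀ t, f t = NormedSpace.exp (t • B) *ᵥ x₀)
    (P : Set (Fin n → ℝ)) (hP : IsCompact P) (T ε ε₀ : ℝ)
    (hT : 0 < T) (hε : 0 < ε) (hε₀ : 0 < ε₀)
    (h : ∀ x ∈ P, ∃ t ∈ Set.Icc (0:ℝ) T,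
      ε₀ < Metric.infDist (NormedSpace.exp (t • A) *ᵥ x)
        {y : Fin n → ℝ | ‖y - f t‖ ≤ ε}) :
    ∃ m : ℕ, 0 < m ∧ ∀ x ∈ P, ∃ j ∈ Finset.Icc 1 m,
      ¬ ‖NormedSpace.exp (((j : ℝ) * (T / m)) • A) *ᵥ x - f ((j : ℝ) * (T / m))‖ ≤ ε := by
  have hfc : Continuous f := by
    have : Continuous fun t : ℝ => NormedSpace.exp (t • B) *ᵥ x₀ :=
      (exp_smul_continuous B).matrix_mulVec continuous_const
    simpa [funext hf] using this
  set g : (Fin n → ℝ) × ℝ → ℝ :=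
    fun p => ‖NormedSpace.exp (p.2 • A) *ᵥ p.1 - f p.2‖ with hg_def
  have hg : Continuous g := by
    apply Continuous.norm
    exact (((exp_smul_continuous A).comp continuous_snd).matrix_mulVec continuous_fst).sub
      (hfc.comp continuous_snd)
  have hK : IsCompact (P ×ˢ Icc (0:ℝ) T) := hP.prod isCompact_Icc
  have hUC : UniformContinuousOn g (P ×ˢ Icc (0:ℝ) T) :=
    hK.uniformContinuousOn_of_continuous hg.continuousOn
  rw [Metric.uniformContinuousOn_iff] at hUC
  obtain ⟨δ, hδ, hδ'⟩ := hUC ε₀ hε₀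
  obtain ⟨m, hmgt⟩ := exists_nat_gt (T / δ)
  have hm : 0 < m := by
    by_contra hc
    push_neg at hc
    interval_cases m
    simp at hmgt
    nlinarith [div_pos hT hδ]
  have hmR : (0:ℝ) < m := Nat.cast_pos.mpr hm
  have hd : 0 < T / m := div_pos hT hmR
  have hdδ : T / m < δ := by
    rw [div_lt_iff₀ hmR]
    calc T = (T / δ) * δ := by field_simp
    _ < m * δ := by nlinarith
    _ = δ * m := mul_comm _ _
  refine ⟨m, hm, ?_⟩
  intro x hx
  obtain ⟨t, ht, hdist⟩ := h x hx
  have hnorm : ε + ε₀ < g (x, t) :=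
    infDist_ball_lt _ _ ε ε₀ hε hε₀ hdist
  set d := T / m with hd_def
  set u := t / d with hu_def
  have hu0 : 0 ≤ u := div_nonneg ht.1 (le_of_lt hd)
  have hum : u ≤ m := by
    rw [hu_def, div_le_iff₀ hd]
    calc t ≤ T := ht.2
    _ = m * d := by rw [hd_def]; field_simp
  have htud : t = u * d := by rw [hu_def]; field_simp
  set j : ℕ := max 1 ⌈u⌉₊ with hj_def
  have hj1 : 1 ≤ j := le_max_left _ _
  have hjm : j ≤ m := by
    apply max_le hm
    exact Nat.ceil_le.mpr hum
  have hjd_range : (0:ℝ) ≤ j * d ∧ (j:ℝ) * d ≤ T := by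
    constructor
    · positivity
    · calc (j:ℝ) * d ≤ m * d := by
            apply mul_le_mul_of_nonneg_right _ (le_of_lt hd)
            exact_mod_cast hjm
      _ = T := by rw [hd_def]; field_simp
  have hclose : |(j:ℝ) * d - t| ≤ d := by
    rcases le_or_gt ⌈u⌉₊ 1 with hcase | hcase
    · have hj_eq : j = 1 := by omega
      have hu1 : u ≤ 1 := le_trans (Nat.le_ceil u) (by exact_mod_cast hcase)
      rw [hj_eq]
      have h1 : t ≤ d := by rw [htud]; nlinarith
      rw [abs_of_nonneg (by simpa using h1)]
      simp only [Nat.cast_one, one_mul]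
      linarith [ht.1]
    · have hj_eq : j = ⌈u⌉₊ := by omega
      have h1 : u ≤ (j:ℝ) := by rw [hj_eq]; exact Nat.le_ceil u
      have h2 : (j:ℝ) < u + 1 := by
        rw [hj_eq]; exact Nat.ceil_lt_add_one hu0
      rw [abs_of_nonneg (by rw [htud]; nlinarith)]
      rw [htud]; nlinarith
  have hmem1 : (x, (j:ℝ) * d) ∈ P ×ˢ Icc (0:ℝ) T := ⟨hx, hjd_range.1, hjd_range.2⟩
  have hmem2 : (x, t) ∈ P ×ˢ Icc (0:ℝ) T := ⟨hx, ht⟩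
  have hdlt : dist ((x, (j:ℝ) * d) : (Fin n → ℝ) × ℝ) (x, t) < δ := by
    rw [Prod.dist_eq]
    apply max_lt
    · simpa using hδ
    · rw [Real.dist_eq]
      exact lt_of_le_of_lt hclose hdδ
  have := hδ' _ hmem1 _ hmem2 hdlt
  rw [Real.dist_eq] at this
  have hgj : ε < g (x, (j:ℝ) * d) := by
    have h1 := abs_lt.mp this
    linarith [h1.1]
  refine ⟨j, Finset.mem_Icc.mpr ⟨hj1, hjm⟩, ?_⟩
  simpa [hg_def, hd_def] using not_le.mpr hgj
end
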